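/- Let A be a Hermitian positive definite matrix on a finite set E with K := A(I+A)⁻¹. For any Λ ⊆ E and any configuration X ⊆ Λ, the marginal probability satisfies: det(I_Λ − K_Λ) · det(A_{[Λ]}(X,X)) = det( P_X K_Λ + P_{Λ\X}(I_Λ − K_Λ) ), where A_{[Λ]} = K_Λ(I_Λ−K_Λ)⁻¹ and P_S denotes the diagonal projection onto coordinates in S. -/

import Mathlib

open Matrix ComplexOrder

lemma sum_helper {m n : Type*} [Fintype m] [Fintype n] [DecidableEq n]
    (e : m → n) (he : Function.Injective e) (y : m → ℂ) (f : n → ℂ) :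
    (∑ j, (∑ i, if e i = j then y i else 0) * f j) = ∑ i, y i * f (e i) := by
  simp only [Finset.sum_mul]
  rw [Finset.sum_comm]
  refine Finset.sum_congr rfl fun i _ => ?_
  rw [Finset.sum_eq_single (e i)]
  · simp
  · intro b _ hb; simp [Ne.symm hb]
  · simp

lemma posdef_submatrix_inj {m n : Type*} [Fintype m] [Fintype n] [DecidableEq n]
    {M : Matrix n n ℂ} (hM : M.PosDef) (e : m → n) (he : Function.Injective e) :
    (M.submatrix e e).PosDef := by
  classical
  refine Matrix.PosDef.of_dotProduct_mulVec_pos (hM.1.submatrix e) fun x hx => ?_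
  set w : n → ℂ := fun j => ∑ i, if e i = j then x i else 0 with hw
  have hwe : ∀ i, w (e i) = x i := by
    intro i
    simp only [hw]
    rw [Finset.sum_eq_single i]
    · simp
    · intro b _ hb
      simp only [he.eq_iff]
      simp [hb]
    · simp
  have hwne : w ≠ 0 := by
    intro h
    apply hx
    funext i
    have := congrFun h (e i)
    simpa [hwe i] using this
  have hstar : (star w : n → ℂ) = fun j => ∑ i, if e i = j then star (x i) else 0 := by
    funext j
    simp [hw, apply_ite]
  have key : star x ⬝ᵥ (M.submatrix e e) *ᵥ x = star w ⬝ᵥ M *ᵥ w := by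
    rw [dotProduct, dotProduct, hstar]
    rw [show (∑ j, (∑ i, if e i = j then star (x i) else 0) * (M *ᵥ w) j)
        = ∑ i, star (x i) * (M *ᵥ w) (e i) from sum_helper e he _ _]
    refine Finset.sum_congr rfl fun i _ => ?_
    congr 1
    rw [mulVec, mulVec, dotProduct, dotProduct]
    rw [show (∑ k, M (e i) k * w k) = ∑ k, w k * M (e i) k from by
      exact Finset.sum_congr rfl fun k _ => mul_comm _ _]
    rw [hw]
    rw [sum_helper e he x (fun k => M (e i) k)]
    exact Finset.sum_congr rfl fun k _ => by simp [mul_comm]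
  rw [key]
  exact hM.dotProduct_mulVec_pos hwne
lemma det_proj_block {n : Type*} [Fintype n] [DecidableEq n]
    (p : n → Prop) [DecidablePred p] (M : Matrix n n ℂ) :
    (Matrix.diagonal (fun i => if p i then (1:ℂ) else 0) * M
      + Matrix.diagonal (fun i => if p i then (0:ℂ) else 1)).det
    = (M.submatrix (fun i : {i // p i} => (i:n)) (fun i : {i // p i} => (i:n))).det := by
  classical
  set N := Matrix.diagonal (fun i => if p i then (1:ℂ) else 0) * M
      + Matrix.diagonal (fun i => if p i then (0:ℂ) else 1) with hN
  rw [← Matrix.det_submatrix_equiv_self (Equiv.sumCompl p) N]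
  have hblock : N.submatrix (Equiv.sumCompl p) (Equiv.sumCompl p)
      = Matrix.fromBlocks
          (M.submatrix (fun i : {i // p i} => (i:n)) (fun i : {i // p i} => (i:n)))
          (M.submatrix (fun i : {i // p i} => (i:n)) (fun i : {i // ¬ p i} => (i:n)))
          0 1 := by
    ext i j
    cases i with
    | inl a =>
      cases j with
      | inl b =>
        simp [hN, Matrix.diagonal_mul, Matrix.diagonal_apply, a.2]
      | inr b =>
        have hne : (a : n) ≠ (b : n) := fun h => b.2 (h ▸ a.2)
        simp [hN, Matrix.diagonal_mul, Matrix.diagonal_apply, a.2, hne]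
    | inr a =>
      cases j with
      | inl b =>
        have hne : (a : n) ≠ (b : n) := fun h => a.2 (h ▸ b.2)
        simp [hN, Matrix.diagonal_mul, Matrix.diagonal_apply, a.2, hne]
      | inr b =>
        simp [hN, Matrix.diagonal_mul, Matrix.diagonal_apply, a.2, Matrix.one_apply,
          Subtype.ext_iff]
  rw [hblock, Matrix.det_fromBlocks_zero₂₁]
  simp

theorem stmt_15 {E : Type*} [Fintype E] [DecidableEq E]
    (A : Matrix E E ℂ) (hA : A.PosDef)
    (K : Matrix E E ℂ) (hK : K = A * (1 + A)⁻¹)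
    (Λ X : Finset E) (hXΛ : X ⊆ Λ)
    (KΛ : Matrix ↥Λ ↥Λ ℂ)
    (hKΛ : KΛ = K.submatrix (fun i : ↥Λ => (i : E)) (fun i : ↥Λ => (i : E))) :
    (1 - KΛ).det * ((KΛ * (1 - KΛ)⁻¹).submatrix
        (fun i : ↥X => (⟨(i : E), hXΛ i.2⟩ : ↥Λ)) (fun i : ↥X => (⟨(i : E), hXΛ i.2⟩ : ↥Λ))).det
    = (Matrix.diagonal (fun i : ↥Λ => if (i : E) ∈ X then (1 : ℂ) else 0) * KΛ
        + Matrix.diagonal (fun i : ↥Λ => if (i : E) ∈ X then (0 : ℂ) else 1) * (1 - KΛ)).det := by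
  classical
  have h1A : (1 + A).PosDef := Matrix.PosDef.one.add hA
  have hdet1A : IsUnit (1 + A).det := h1A.det_pos.ne'.isUnit
  have hmul : (1 + A) * (1 + A)⁻¹ = 1 := Matrix.mul_nonsing_inv _ hdet1A
  have hKeq : 1 - K = (1 + A)⁻¹ := by
    rw [hK]
    calc (1 : Matrix E E ℂ) - A * (1 + A)⁻¹
        = (1 + A) * (1 + A)⁻¹ - A * (1 + A)⁻¹ := by rw [hmul]
      _ = (1 + A - A) * (1 + A)⁻¹ := by rw [sub_mul]
      _ = (1 + A)⁻¹ := by rw [add_sub_cancel_right, one_mul]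
  have hsub : 1 - KΛ
      = ((1 + A)⁻¹).submatrix (fun i : ↥Λ => (i : E)) (fun i : ↥Λ => (i : E)) := by
    rw [← hKeq]
    ext i j
    simp [hKΛ, Matrix.sub_apply, Matrix.one_apply]
  have hpd : (1 - KΛ).PosDef := by
    rw [hsub]
    exact posdef_submatrix_inj h1A.inv _ Subtype.coe_injective
  have hu : IsUnit (1 - KΛ).det := hpd.det_pos.ne'.isUnit
  have hBmul : (KΛ * (1 - KΛ)⁻¹) * (1 - KΛ) = KΛ := by
    rw [mul_assoc, Matrix.nonsing_inv_mul _ hu, mul_one]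
  have hRHS : Matrix.diagonal (fun i : ↥Λ => if (i : E) ∈ X then (1 : ℂ) else 0) * KΛ
        + Matrix.diagonal (fun i : ↥Λ => if (i : E) ∈ X then (0 : ℂ) else 1) * (1 - KΛ)
      = (Matrix.diagonal (fun i : ↥Λ => if (i : E) ∈ X then (1 : ℂ) else 0)
            * (KΛ * (1 - KΛ)⁻¹)
        + Matrix.diagonal (fun i : ↥Λ => if (i : E) ∈ X then (0 : ℂ) else 1)) * (1 - KΛ) := by
    rw [add_mul, mul_assoc, hBmul]
  rw [hRHS, Matrix.det_mul,
    det_proj_block (fun i : ↥Λ => (i : E) ∈ X) (KΛ * (1 - KΛ)⁻¹), mul_comm]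
  congr 1
  let g : ↥X ≃ {i : ↥Λ // (i : E) ∈ X} :=
    { toFun := fun i => ⟨⟨(i : E), hXΛ i.2⟩, i.2⟩
      invFun := fun i => ⟨((i : ↥Λ) : E), i.2⟩
      left_inv := fun i => rfl
      right_inv := fun i => rfl }
  conv_rhs => rw [← Matrix.det_submatrix_equiv_self g, Matrix.submatrix_submatrix]
  rfl
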